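/- Let X be a Banach space and β : [0,∞) → [0,∞) a function such that for every separable subspace S of X there is a norm ‖·‖_S on S which is 2-equivalent to the original norm and whose relative asymptotic modulus ϑ̄_{‖·‖_S} satisfies ϑ̄_{‖·‖_S}(t) ≥ β(t) for all t. Then for every λ > 1 there exists a 2-equivalent norm |||·||| on all of X such that ϑ̄_{|||·|||}(t) ≥ β(t/λ) for all t > 0. -/

import Mathlib

open MeasureTheory Filter Set Metric
open scoped Pointwise ENNReal

noncomputable section

section Defs

variable (X : Type*) [NormedAddCommGroup X] [NormedSpace ℝ X]

/-- The Rademacher functions on `[0,1]`. -/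
def rademacher (k : ℕ) (t : ℝ) : ℝ := if Int.fract (2 ^ k * t) < 1 / 2 then 1 else -1

variable {X}

/-- The `L¹` Rademacher average `∫₀¹ ‖∑ₖ rₖ(t) xₖ‖ dt` of a finite sequence. -/
def radAvg {n : ℕ} (x : Fin n → X) : ℝ :=
  ∫ t in Icc (0 : ℝ) 1, ‖∑ k : Fin n, rademacher (k : ℕ) t • x k‖

variable (X)

/-- `N` is a norm on `X`. -/
structure IsNormOn (N : X → ℝ) : Prop where
  add_le : ∀ x y, N (x + y) ≤ N x + N y
  smul_eq : ∀ (c : ℝ) (x : X), N (c • x) = |c| * N x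
  eq_zero : ∀ x, N x = 0 → x = 0

variable {X}

/-- `N` is `γ`-equivalent to the original norm. -/
def EquivNorm (γ : ℝ) (N : X → ℝ) : Prop :=
  ∀ x, γ⁻¹ * ‖x‖ ≤ N x ∧ N x ≤ γ * ‖x‖

/-- The relative modulus of convexity `ϑ_N` (separation in the ambient norm). -/
def relConvMod (N : X → ℝ) (t : ℝ) : ℝ :=
  1 - (1 / 2) * sSup {r | ∃ x y, N x = 1 ∧ N y = 1 ∧ ‖x - y‖ > t ∧ r = N (x + y)}

/-- The modulus of uniform convexity `δ_N`. -/
def convMod (N : X → ℝ) (t : ℝ) : ℝ :=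
  1 - (1 / 2) * sSup {r | ∃ x y, N x = 1 ∧ N y = 1 ∧ N (x - y) > t ∧ r = N (x + y)}

/-- `u` converges weakly to `x`. -/
def WeakConvSeq (u : ℕ → X) (x : X) : Prop :=
  ∀ φ : X →L[ℝ] ℝ, Tendsto (fun n => φ (u n)) atTop (nhds (φ x))

/-- The relative asymptotic modulus `ϑ̄_N` (separation in the ambient norm). -/
def relAsympMod (N : X → ℝ) (t : ℝ) : ℝ :=
  1 - sSup {r | ∃ x : X, r = N x ∧ ∃ u : ℕ → X, WeakConvSeq u x ∧
    (∀ n, N (u n) ≤ 1) ∧ sInf {d | ∃ n m : ℕ, n ≠ m ∧ d = ‖u n - u m‖} > t}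

/-- `Y` is a finite-codimensional subspace. -/
def FiniteCodim (Y : Subspace ℝ X) : Prop := FiniteDimensional ℝ (X ⧸ Y)

/-- The modulus of asymptotic uniform convexity `δ̄_N`. -/
def asympConvMod (N : X → ℝ) (t : ℝ) : ℝ :=
  sInf {r | ∃ x, N x = 1 ∧ r = sSup {s | ∃ Y : Subspace ℝ X, FiniteCodim Y ∧
    s = sInf {v | ∃ y, y ∈ Y ∧ N y = 1 ∧ v = N (x + t • y) - 1}}}

end Defs


set_option maxHeartbeats 1000000

section AuxGlue

open TopologicalSpace

variable {X : Type*} [NormedAddCommGroup X] [NormedSpace ℝ X]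

/-- Weak lower semicontinuity: norm bound on weak limits. -/
lemma norm_le_of_weakConvSeq {u : ℕ → X} {x : X} (h : WeakConvSeq u x) {C : ℝ}
    (hC0 : 0 ≤ C) (hC : ∀ n, ‖u n‖ ≤ C) : ‖x‖ ≤ C := by
  rcases eq_or_ne x 0 with rfl | hx
  · simpa using hC0
  obtain ⟨g, hg1, hgx⟩ := exists_dual_vector ℝ x (norm_ne_zero_iff.mpr hx)
  have hten : Tendsto (fun n => g (u n)) atTop (nhds ‖x‖) := by
    have := h g
    rwa [hgx] at this
  refine le_of_tendsto hten (Eventually.of_forall fun n => ?_)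
  calc g (u n) ≤ |g (u n)| := le_abs_self _
  _ = ‖g (u n)‖ := (Real.norm_eq_abs _).symm
  _ ≤ ‖g‖ * ‖u n‖ := g.le_opNorm _
  _ ≤ 1 * C := by rw [hg1]; exact mul_le_mul_of_nonneg_left (hC n) zero_le_one
  _ = C := one_mul C

/-- The test set of the relative asymptotic modulus is bounded above for 2-equivalent norms. -/
lemma bddAbove_modSet {N : X → ℝ} (he : EquivNorm 2 N) (t : ℝ) :
    BddAbove {r | ∃ x : X, r = N x ∧ ∃ u : ℕ → X, WeakConvSeq u x ∧
      (∀ n, N (u n) ≤ 1) ∧ sInf {d | ∃ n m : ℕ, n ≠ m ∧ d = ‖u n - u m‖} > t} := by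
  refine ⟨4, ?_⟩
  rintro r ⟨x, rfl, u, hw, hub, -⟩
  have hxnorm : ‖x‖ ≤ 2 := by
    refine norm_le_of_weakConvSeq hw (by norm_num) (fun n => ?_)
    have h1 := (he (u n)).1
    have := hub n
    norm_num at h1
    linarith
  have := (he x).2
  linarith

lemma modSet_nonneg {N : X → ℝ} (he : EquivNorm 2 N) (t : ℝ) :
    ∀ r ∈ {r | ∃ x : X, r = N x ∧ ∃ u : ℕ → X, WeakConvSeq u x ∧
      (∀ n, N (u n) ≤ 1) ∧ sInf {d | ∃ n m : ℕ, n ≠ m ∧ d = ‖u n - u m‖} > t}, 0 ≤ r := by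
  rintro r ⟨x, rfl, -⟩
  have h := (he x).1
  have : (0:ℝ) ≤ 2⁻¹ * ‖x‖ := by positivity
  linarith

lemma relAsympMod_le_one {N : X → ℝ} (he : EquivNorm 2 N) (t : ℝ) :
    relAsympMod N t ≤ 1 := by
  have := Real.sSup_nonneg (modSet_nonneg he t)
  unfold relAsympMod
  linarith

/-- The key one-subspace estimate. -/
lemma perS {S : Subspace ℝ X} {N : ↥S → ℝ} (hn : IsNormOn (↥S) N) (he : EquivNorm 2 N)
    {t lam ε M : ℝ} (ht : 0 < t) (hε : 0 < ε) (hε1 : ε ≤ 1)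
    (hsep2 : t / lam < t - (t + 4) * ε)
    (hmod : relAsympMod N (t / lam) ≥ 1 - M) (hM0 : 0 ≤ M) (hM1 : M ≤ 1)
    {x : X} (hx : x ∈ S) {u : ℕ → X} (hu : ∀ n, u n ∈ S)
    (hw : WeakConvSeq u x) (hub : ∀ n, N ⟨u n, hu n⟩ ≤ 1 + ε)
    (hsepu : t < sInf {d | ∃ n m : ℕ, n ≠ m ∧ d = ‖u n - u m‖}) :
    N ⟨x, hx⟩ ≤ (1 + ε) * M := by
  classical
  set cs : ℕ → ℝ := fun n => max 1 (N ⟨u n, hu n⟩) with hcs_def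
  have hcs : ∀ n, cs n ∈ Icc (1:ℝ) (1 + ε) := fun n =>
    ⟨le_max_left _ _, max_le (by linarith) (hub n)⟩
  obtain ⟨c, hcIcc, φ, hφ, hconv⟩ := (isCompact_Icc).tendsto_subseq hcs
  have hc1 : (1:ℝ) ≤ c := hcIcc.1
  have hc2 : c ≤ 1 + ε := hcIcc.2
  have hc0 : (0:ℝ) < c := by linarith
  have hDu : ∀ n m : ℕ, n ≠ m → t < ‖u n - u m‖ := by
    intro n m hnm
    have hbdd : BddBelow {d | ∃ n m : ℕ, n ≠ m ∧ d = ‖u n - u m‖} := by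
      refine ⟨0, ?_⟩
      rintro d ⟨n', m', -, rfl⟩
      exact norm_nonneg _
    exact lt_of_lt_of_le hsepu (csInf_le hbdd ⟨n, m, hnm, rfl⟩)
  set w : ℕ → ↥S := fun j => (cs (φ j))⁻¹ • (⟨u (φ j), hu (φ j)⟩ : ↥S) with hw_def
  set y : ↥S := c⁻¹ • (⟨x, hx⟩ : ↥S) with hy_def
  have hcspos : ∀ n, (0:ℝ) < cs n := fun n => lt_of_lt_of_le one_pos (hcs n).1
  have hwub : ∀ j, N (w j) ≤ 1 := by
    intro j
    simp only [hw_def]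
    rw [hn.smul_eq, abs_of_pos (inv_pos.mpr (hcspos (φ j)))]
    rw [inv_mul_le_iff₀ (hcspos (φ j)), mul_one]
    exact le_max_right _ _
  have hwconv : WeakConvSeq w y := by
    intro f
    obtain ⟨g, hg, -⟩ := exists_extension_norm_eq S f
    have h1 : Tendsto (fun j => (cs (φ j))⁻¹) atTop (nhds c⁻¹) :=
      (hconv.inv₀ (ne_of_gt hc0))
    have h2 : Tendsto (fun j => g (u (φ j))) atTop (nhds (g x)) :=
      (hw g).comp hφ.tendsto_atTop
    have h3 : Tendsto (fun j => (cs (φ j))⁻¹ * g (u (φ j))) atTop (nhds (c⁻¹ * g x)) :=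
      h1.mul h2
    have hfy : f y = c⁻¹ * g x := by
      rw [hy_def, f.map_smul, smul_eq_mul, hg ⟨x, hx⟩]
    rw [hfy]
    convert h3 using 2 with j
    simp only [hw_def]
    rw [f.map_smul, smul_eq_mul, hg ⟨u (φ j), hu (φ j)⟩]
  have hwsep : ∀ i j : ℕ, i ≠ j → t - (t + 4) * ε ≤ ‖w i - w j‖ := by
    intro i j hij
    have hφij : φ i ≠ φ j := fun h => hij (hφ.injective h)
    have hab : t < ‖u (φ i) - u (φ j)‖ := hDu _ _ hφij
    set ca := cs (φ i)
    set cb := cs (φ j)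
    have hca := hcs (φ i)
    have hcb := hcs (φ j)
    have hca0 : (0:ℝ) < ca := hcspos _
    have hcb0 : (0:ℝ) < cb := hcspos _
    have hcoe : ((w i - w j : ↥S) : X) = ca⁻¹ • u (φ i) - cb⁻¹ • u (φ j) := by
      simp [hw_def]; rfl
    have hnormeq : ‖w i - w j‖ = ‖ca⁻¹ • u (φ i) - cb⁻¹ • u (φ j)‖ := by
      rw [Submodule.coe_norm, hcoe]
    rw [hnormeq]
    have hident : ca⁻¹ • u (φ i) - cb⁻¹ • u (φ j)
        = ca⁻¹ • (u (φ i) - u (φ j)) + (ca⁻¹ - cb⁻¹) • u (φ j) := by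
      rw [smul_sub, sub_smul]; abel
    rw [hident]
    have htri : ‖ca⁻¹ • (u (φ i) - u (φ j))‖ - ‖(ca⁻¹ - cb⁻¹) • u (φ j)‖
        ≤ ‖ca⁻¹ • (u (φ i) - u (φ j)) + (ca⁻¹ - cb⁻¹) • u (φ j)‖ := by
      have := norm_add_le (ca⁻¹ • (u (φ i) - u (φ j)) + (ca⁻¹ - cb⁻¹) • u (φ j))
        (-((ca⁻¹ - cb⁻¹) • u (φ j)))
      simp only [add_neg_cancel_right, norm_neg] at this
      linarith
    have h1 : (1 - ε) * t ≤ ‖ca⁻¹ • (u (φ i) - u (φ j))‖ := by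
      rw [norm_smul, Real.norm_eq_abs, abs_of_pos (inv_pos.mpr hca0)]
      have hinv : (1:ℝ) - ε ≤ ca⁻¹ := by
        have hmul : (1 - ε) * ca ≤ 1 := by nlinarith [hca.1, hca.2]
        calc (1:ℝ) - ε = ((1 - ε) * ca) * ca⁻¹ := by field_simp
        _ ≤ 1 * ca⁻¹ := mul_le_mul_of_nonneg_right hmul (by positivity)
        _ = ca⁻¹ := one_mul _
      calc (1 - ε) * t ≤ ca⁻¹ * t := mul_le_mul_of_nonneg_right hinv (le_of_lt ht)
      _ ≤ ca⁻¹ * ‖u (φ i) - u (φ j)‖ :=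
          mul_le_mul_of_nonneg_left (le_of_lt hab) (by positivity)
    have h2 : ‖(ca⁻¹ - cb⁻¹) • u (φ j)‖ ≤ ε * 4 := by
      rw [norm_smul, Real.norm_eq_abs]
      have hb4 : ‖u (φ j)‖ ≤ 4 := by
        have := (he ⟨u (φ j), hu (φ j)⟩).1
        rw [Submodule.coe_norm] at this
        have := hub (φ j)
        norm_num at *
        linarith
      have habs : |ca⁻¹ - cb⁻¹| ≤ ε := by
        have hdiff : ca⁻¹ - cb⁻¹ = (cb - ca) / (ca * cb) := by
          field_simp
        rw [hdiff, abs_div, abs_of_pos (mul_pos hca0 hcb0)]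
        have h1cacb : (1:ℝ) ≤ ca * cb := by nlinarith [hca.1, hcb.1]
        have hnum : |cb - ca| ≤ ε := by
          rw [abs_sub_le_iff]
          constructor <;> [linarith [hcb.2, hca.1]; linarith [hca.2, hcb.1]]
        calc |cb - ca| / (ca * cb) ≤ |cb - ca| / 1 :=
          div_le_div_of_nonneg_left (abs_nonneg _) one_pos h1cacb |>.trans_eq rfl
        _ = |cb - ca| := div_one _
        _ ≤ ε := hnum
      have h0 : (0:ℝ) ≤ ‖u (φ j)‖ := norm_nonneg _
      nlinarith
    nlinarith
  have hymem : N y ∈ {r | ∃ x' : ↥S, r = N x' ∧ ∃ u' : ℕ → ↥S, WeakConvSeq u' x' ∧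
      (∀ n, N (u' n) ≤ 1) ∧ sInf {d | ∃ n m : ℕ, n ≠ m ∧ d = ‖u' n - u' m‖} > t / lam} := by
    refine ⟨y, rfl, w, hwconv, hwub, ?_⟩
    have hne : {d | ∃ n m : ℕ, n ≠ m ∧ d = ‖w n - w m‖}.Nonempty :=
      ⟨‖w 0 - w 1‖, 0, 1, by norm_num, rfl⟩
    have hlb : ∀ d ∈ {d | ∃ n m : ℕ, n ≠ m ∧ d = ‖w n - w m‖}, t - (t + 4) * ε ≤ d := by
      rintro d ⟨n, m, hnm, rfl⟩
      exact hwsep n m hnm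
    exact lt_of_lt_of_le hsep2 (le_csInf hne hlb)
  have hsSup : N y ≤ 1 - (1 - M) := by
    have hle : N y ≤ sSup _ := le_csSup (bddAbove_modSet he (t / lam)) hymem
    unfold relAsympMod at hmod
    linarith
  have hNy : N y = c⁻¹ * N ⟨x, hx⟩ := by
    rw [hy_def, hn.smul_eq, abs_of_pos (inv_pos.mpr hc0)]
  have hNynn : 0 ≤ N y := le_trans (by positivity) (he y).1
  have hNx : N ⟨x, hx⟩ = c * N y := by
    rw [hNy, ← mul_assoc, mul_inv_cancel₀ (ne_of_gt hc0), one_mul]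
  rw [hNx]
  calc c * N y ≤ (1 + ε) * N y := mul_le_mul_of_nonneg_right hc2 hNynn
  _ ≤ (1 + ε) * M := by
      have : N y ≤ M := by linarith
      exact mul_le_mul_of_nonneg_left this (by linarith)

section Glue
variable (𝒩 : ∀ S : Subspace ℝ X, ↥S → ℝ)

def glueB (S₀ : Subspace ℝ X) (z : X) : Set ℝ :=
  {r | ∃ S : Subspace ℝ X, S₀ ≤ S ∧ IsSeparable (S : Set X) ∧ ∃ hz : z ∈ S, r = 𝒩 S ⟨z, hz⟩}

def glueA (z : X) : Set ℝ :=
  {b | ∃ S₀ : Subspace ℝ X, IsSeparable (S₀ : Set X) ∧ ∃ hz : z ∈ S₀, b = sSup (glueB 𝒩 S₀ z)}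

def glueNorm (z : X) : ℝ := sInf (glueA 𝒩 z)

variable {𝒩}
variable (hequiv : ∀ S : Subspace ℝ X, IsSeparable (S : Set X) → EquivNorm 2 (𝒩 S))
variable (hnorm : ∀ S : Subspace ℝ X, IsSeparable (S : Set X) → IsNormOn (↥S) (𝒩 S))

section
include hequiv

lemma glueB_mem_bounds {S₀ : Subspace ℝ X} {z : X} {r : ℝ} (hr : r ∈ glueB 𝒩 S₀ z) :
    2⁻¹ * ‖z‖ ≤ r ∧ r ≤ 2 * ‖z‖ := by
  obtain ⟨S, hle, hsep, hz, rfl⟩ := hr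
  have := hequiv S hsep ⟨z, hz⟩
  simpa using this

lemma glueB_bddAbove (S₀ : Subspace ℝ X) (z : X) : BddAbove (glueB 𝒩 S₀ z) :=
  ⟨2 * ‖z‖, fun _ hr => (glueB_mem_bounds hequiv hr).2⟩

omit hequiv in
lemma glueB_nonempty {S₀ : Subspace ℝ X} {z : X} (hsep : IsSeparable (S₀ : Set X))
    (hz : z ∈ S₀) : (glueB 𝒩 S₀ z).Nonempty :=
  ⟨𝒩 S₀ ⟨z, hz⟩, S₀, le_rfl, hsep, hz, rfl⟩

lemma glueB_sSup_bounds {S₀ : Subspace ℝ X} {z : X} (hsep : IsSeparable (S₀ : Set X))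
    (hz : z ∈ S₀) : 2⁻¹ * ‖z‖ ≤ sSup (glueB 𝒩 S₀ z) ∧ sSup (glueB 𝒩 S₀ z) ≤ 2 * ‖z‖ := by
  constructor
  · exact le_trans (glueB_mem_bounds hequiv ⟨S₀, le_rfl, hsep, hz, rfl⟩).1
      (le_csSup (glueB_bddAbove hequiv S₀ z) ⟨S₀, le_rfl, hsep, hz, rfl⟩)
  · exact Real.sSup_le (fun r hr => (glueB_mem_bounds hequiv hr).2) (by positivity)

omit hequiv in
lemma glueA_nonempty (z : X) : (glueA 𝒩 z).Nonempty := by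
  refine ⟨sSup (glueB 𝒩 (Submodule.span ℝ {z}) z), Submodule.span ℝ {z}, ?_,
    Submodule.mem_span_singleton_self z, rfl⟩
  exact IsSeparable.span ((Set.countable_singleton z).isSeparable)

lemma glueA_mem_bounds {z : X} {b : ℝ} (hb : b ∈ glueA 𝒩 z) : 2⁻¹ * ‖z‖ ≤ b := by
  obtain ⟨S₀, hsep, hz, rfl⟩ := hb
  exact (glueB_sSup_bounds hequiv hsep hz).1

lemma glueA_bddBelow (z : X) : BddBelow (glueA 𝒩 z) :=
  ⟨2⁻¹ * ‖z‖, fun _ hb => glueA_mem_bounds hequiv hb⟩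

lemma glueNorm_bounds (z : X) : 2⁻¹ * ‖z‖ ≤ glueNorm 𝒩 z ∧ glueNorm 𝒩 z ≤ 2 * ‖z‖ := by
  constructor
  · exact le_csInf (glueA_nonempty z) (fun b hb => glueA_mem_bounds hequiv hb)
  · obtain ⟨b, S₀, hsep, hz, rfl⟩ := glueA_nonempty (𝒩 := 𝒩) z
    exact le_trans (csInf_le (glueA_bddBelow hequiv z) ⟨S₀, hsep, hz, rfl⟩)
      (glueB_sSup_bounds hequiv hsep hz).2

lemma glueNorm_le_of_mem {S₀ : Subspace ℝ X} {z : X} (hsep : IsSeparable (S₀ : Set X))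
    (hz : z ∈ S₀) : glueNorm 𝒩 z ≤ sSup (glueB 𝒩 S₀ z) :=
  csInf_le (glueA_bddBelow hequiv z) ⟨S₀, hsep, hz, rfl⟩

lemma glueNorm_nonneg (z : X) : 0 ≤ glueNorm 𝒩 z :=
  le_trans (by positivity) (glueNorm_bounds hequiv z).1

include hnorm

lemma glueNorm_add_le (x y : X) :
    glueNorm 𝒩 (x + y) ≤ glueNorm 𝒩 x + glueNorm 𝒩 y := by
  have key : ∀ a ∈ glueA 𝒩 x, ∀ b ∈ glueA 𝒩 y, glueNorm 𝒩 (x + y) ≤ a + b := by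
    rintro a ⟨S₀, hsep₀, hx₀, rfl⟩ b ⟨S₁, hsep₁, hy₁, rfl⟩
    set S₂ : Subspace ℝ X := Submodule.span ℝ ((S₀ : Set X) ∪ (S₁ : Set X)) with hS₂
    have hsep₂ : IsSeparable (S₂ : Set X) := IsSeparable.span (hsep₀.union hsep₁)
    have hle₀ : S₀ ≤ S₂ := by
      conv_lhs => rw [← Submodule.span_eq S₀]
      exact Submodule.span_mono subset_union_left
    have hle₁ : S₁ ≤ S₂ := by
      conv_lhs => rw [← Submodule.span_eq S₁]
      exact Submodule.span_mono subset_union_right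
    have hx₂ : x ∈ S₂ := hle₀ hx₀
    have hy₂ : y ∈ S₂ := hle₁ hy₁
    have hxy₂ : x + y ∈ S₂ := S₂.add_mem hx₂ hy₂
    refine le_trans (glueNorm_le_of_mem hequiv hsep₂ hxy₂) ?_
    refine Real.sSup_le ?_ ?_
    · rintro r ⟨S, hle, hsep, hz, rfl⟩
      have hxS : x ∈ S := hle hx₂
      have hyS : y ∈ S := hle hy₂
      have heq : (⟨x + y, hz⟩ : ↥S) = ⟨x, hxS⟩ + ⟨y, hyS⟩ := rfl
      rw [heq]
      refine le_trans ((hnorm S hsep).add_le _ _) (add_le_add ?_ ?_)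
      · exact le_csSup (glueB_bddAbove hequiv S₀ x) ⟨S, le_trans hle₀ hle, hsep, hxS, rfl⟩
      · exact le_csSup (glueB_bddAbove hequiv S₁ y) ⟨S, le_trans hle₁ hle, hsep, hyS, rfl⟩
    · have h1 := (glueB_sSup_bounds hequiv hsep₀ hx₀).1
      have h2 := (glueB_sSup_bounds hequiv hsep₁ hy₁).1
      have hx' : (0:ℝ) ≤ 2⁻¹ * ‖x‖ := by positivity
      have hy' : (0:ℝ) ≤ 2⁻¹ * ‖y‖ := by positivity
      linarith
  have h1 : ∀ b ∈ glueA 𝒩 y, glueNorm 𝒩 (x + y) - b ≤ glueNorm 𝒩 x := by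
    intro b hb
    refine le_csInf (glueA_nonempty x) (fun a ha => ?_)
    linarith [key a ha b hb]
  have h2 : glueNorm 𝒩 (x + y) - glueNorm 𝒩 x ≤ glueNorm 𝒩 y := by
    refine le_csInf (glueA_nonempty y) (fun b hb => ?_)
    linarith [h1 b hb]
  linarith

lemma glueNorm_smul_le (c : ℝ) (hc : c ≠ 0) (x : X) :
    glueNorm 𝒩 (c • x) ≤ |c| * glueNorm 𝒩 x := by
  have hcpos : 0 < |c| := abs_pos.mpr hc
  have key : ∀ a ∈ glueA 𝒩 x, glueNorm 𝒩 (c • x) ≤ |c| * a := by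
    rintro a ⟨S₀, hsep₀, hx₀, rfl⟩
    have hcx : c • x ∈ S₀ := S₀.smul_mem c hx₀
    refine le_trans (glueNorm_le_of_mem hequiv hsep₀ hcx) ?_
    refine Real.sSup_le ?_ ?_
    · rintro r ⟨S, hle, hsep, hz, rfl⟩
      have hxS : x ∈ S := hle hx₀
      have heq : (⟨c • x, hz⟩ : ↥S) = c • ⟨x, hxS⟩ := rfl
      rw [heq, (hnorm S hsep).smul_eq]
      exact mul_le_mul_of_nonneg_left
        (le_csSup (glueB_bddAbove hequiv S₀ x) ⟨S, hle, hsep, hxS, rfl⟩) (abs_nonneg c)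
    · have h1 : (0:ℝ) ≤ 2⁻¹ * ‖x‖ := by positivity
      nlinarith [(glueB_sSup_bounds hequiv hsep₀ hx₀).1]
  have hdiv : glueNorm 𝒩 (c • x) / |c| ≤ glueNorm 𝒩 x := by
    refine le_csInf (glueA_nonempty x) (fun a ha => ?_)
    rw [div_le_iff₀ hcpos]
    linarith [key a ha, mul_comm a |c|]
  calc glueNorm 𝒩 (c • x) = |c| * (glueNorm 𝒩 (c • x) / |c|) := by field_simp
  _ ≤ |c| * glueNorm 𝒩 x := by nlinarith

lemma glueNorm_isNormOn : IsNormOn X (glueNorm 𝒩) := by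
  constructor
  · exact glueNorm_add_le hequiv hnorm
  · intro c x
    rcases eq_or_ne c 0 with rfl | hc
    · have h0 : glueNorm 𝒩 ((0:ℝ) • x) = 0 := by
        have h := glueNorm_bounds hequiv ((0:ℝ) • x)
        rw [zero_smul] at h ⊢
        have h2 := h.2
        have h3 := glueNorm_nonneg hequiv (0 : X)
        simp only [norm_zero, mul_zero] at *
        linarith
      rw [h0]; simp
    · refine le_antisymm (glueNorm_smul_le hequiv hnorm c hc x) ?_
      have hback := glueNorm_smul_le hequiv hnorm c⁻¹ (inv_ne_zero hc) (c • x)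
      rw [inv_smul_smul₀ hc, abs_inv] at hback
      have hcpos : 0 < |c| := abs_pos.mpr hc
      rw [← mul_le_mul_iff_right₀ (inv_pos.mpr hcpos)]
      calc |c|⁻¹ * (|c| * glueNorm 𝒩 x) = glueNorm 𝒩 x := by field_simp
      _ ≤ |c|⁻¹ * glueNorm 𝒩 (c • x) := hback
  · intro x hx
    have h1 := (glueNorm_bounds hequiv x).1
    rw [hx] at h1
    have h2 : ‖x‖ ≤ 0 := by linarith
    simpa using le_antisymm h2 (norm_nonneg x)

omit hnorm in
lemma glueNorm_equiv : EquivNorm 2 (glueNorm 𝒩) := fun x => glueNorm_bounds hequiv x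

/-- The relative asymptotic modulus of the glued norm. -/
lemma glueNorm_modulus {t lam bet : ℝ} (ht : 0 < t) (hlam : 1 < lam)
    (hb0 : 0 ≤ bet) (hb1 : bet ≤ 1)
    (hmod : ∀ S : Subspace ℝ X, IsSeparable (S : Set X) → relAsympMod (𝒩 S) (t / lam) ≥ bet) :
    relAsympMod (glueNorm 𝒩) t ≥ bet := by
  set M : ℝ := 1 - bet with hM_def
  have hM0 : 0 ≤ M := by simp only [hM_def]; linarith
  have hM1 : M ≤ 1 := by simp only [hM_def]; linarith
  have hkey : ∀ r ∈ {r | ∃ x : X, r = glueNorm 𝒩 x ∧ ∃ u : ℕ → X, WeakConvSeq u x ∧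
      (∀ n, glueNorm 𝒩 (u n) ≤ 1) ∧
      sInf {d | ∃ n m : ℕ, n ≠ m ∧ d = ‖u n - u m‖} > t}, r ≤ M := by
    rintro r ⟨x, rfl, u, hwc, hub, hsepu⟩
    -- for every good ε, bound by (1+ε) * M
    have keyε : ∀ ε : ℝ, 0 < ε → ε ≤ 1 → t / lam < t - (t + 4) * ε →
        glueNorm 𝒩 x ≤ (1 + ε) * M := by
      intro ε hε hε1 hsep2
      have hchoice : ∀ n : ℕ, ∃ S₀ : Subspace ℝ X, IsSeparable (S₀ : Set X) ∧
          ∃ _ : u n ∈ S₀, sSup (glueB 𝒩 S₀ (u n)) < 1 + ε := by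
        intro n
        have hlt : sInf (glueA 𝒩 (u n)) < 1 + ε := lt_of_le_of_lt (hub n) (by linarith)
        obtain ⟨a, ⟨S₀, hsep, hz, rfl⟩, halt⟩ :=
          exists_lt_of_csInf_lt (glueA_nonempty (u n)) hlt
        exact ⟨S₀, hsep, hz, halt⟩
      choose S0 hsep0 hmem0 hlt0 using hchoice
      set Sstar : Subspace ℝ X :=
        Submodule.span ℝ ({x} ∪ ⋃ n, (S0 n : Set X)) with hSstar
      have hsepstar : IsSeparable (Sstar : Set X) := by
        refine IsSeparable.span ?_
        exact (((Set.countable_singleton x).isSeparable).union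
          (isSeparable_iUnion.mpr fun n => hsep0 n))
      have hle0 : ∀ n, S0 n ≤ Sstar := by
        intro n
        conv_lhs => rw [← Submodule.span_eq (S0 n)]
        refine Submodule.span_mono ?_
        exact subset_trans (Set.subset_iUnion (fun n => (S0 n : Set X)) n) subset_union_right
      have hxstar : x ∈ Sstar := Submodule.subset_span (Or.inl rfl)
      have hustar : ∀ n, u n ∈ Sstar := fun n => hle0 n (hmem0 n)
      refine le_trans (glueNorm_le_of_mem hequiv hsepstar hxstar) ?_
      refine Real.sSup_le ?_ (by nlinarith)
      rintro r ⟨S, hle, hsep, hz, rfl⟩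
      have hmodS : relAsympMod (𝒩 S) (t / lam) ≥ 1 - M := by
        have := hmod S hsep
        simp only [hM_def]
        linarith
      refine perS (hnorm S hsep) (hequiv S hsep) ht hε hε1 hsep2 hmodS hM0 hM1 hz
        (fun n => hle (hustar n)) hwc ?_ hsepu
      intro n
      refine le_of_lt (lt_of_le_of_lt ?_ (hlt0 n))
      exact le_csSup (glueB_bddAbove hequiv (S0 n) (u n))
        ⟨S, le_trans (hle0 n) hle, hsep, hle (hustar n), rfl⟩
    -- let ε → 0
    by_contra hcon
    push_neg at hcon
    have htlam : t / lam < t := div_lt_self ht hlam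
    set ε₁ : ℝ := (t - t / lam) / (t + 4) with hε₁_def
    have hε₁pos : 0 < ε₁ := by
      apply div_pos <;> linarith
    set ε : ℝ := min 1 (min (ε₁ / 2) ((glueNorm 𝒩 x - M) / 2)) with hε_def
    have hδpos : 0 < glueNorm 𝒩 x - M := by linarith
    have hεpos : 0 < ε := by
      apply lt_min one_pos
      apply lt_min <;> [linarith; linarith]
    have hε1 : ε ≤ 1 := min_le_left _ _
    have hεε₁ : ε ≤ ε₁ / 2 := le_trans (min_le_right _ _) (min_le_left _ _)
    have hεδ : ε ≤ (glueNorm 𝒩 x - M) / 2 := le_trans (min_le_right _ _) (min_le_right _ _)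
    have hsep2 : t / lam < t - (t + 4) * ε := by
      have h4 : (0:ℝ) < t + 4 := by linarith
      have : (t + 4) * ε ≤ (t + 4) * (ε₁ / 2) := mul_le_mul_of_nonneg_left hεε₁ (le_of_lt h4)
      have heq : (t + 4) * ε₁ = t - t / lam := by
        rw [hε₁_def]; field_simp
      nlinarith
    have := keyε ε hεpos hε1 hsep2
    -- (1+ε) M = M + ε M ≤ M + ε ≤ M + (glueNorm x - M)/2 < glueNorm x
    have hεM : ε * M ≤ ε := by nlinarith
    nlinarith
  unfold relAsympMod
  have := Real.sSup_le hkey hM0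
  simp only [hM_def] at this ⊢
  linarith

end
end Glue
end AuxGlue

/-- gluing AUC renormings of separable subspaces. -/
theorem stmt1 {X : Type*} [NormedAddCommGroup X] [NormedSpace ℝ X] [CompleteSpace X]
    (β : ℝ → ℝ) (hβ : ∀ t, 0 ≤ t → 0 ≤ β t)
    (hS : ∀ S : Subspace ℝ X, TopologicalSpace.IsSeparable (S : Set X) →
      ∃ N : S → ℝ, IsNormOn S N ∧ EquivNorm 2 N ∧ ∀ t : ℝ, 0 < t → relAsympMod N t ≥ β t) :
    ∀ lam : ℝ, 1 < lam → ∃ N : X → ℝ, IsNormOn X N ∧ EquivNorm 2 N ∧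
      ∀ t : ℝ, 0 < t → relAsympMod N t ≥ β (t / lam) := by
  classical
  intro lam hlam
  have hlam0 : (0:ℝ) < lam := by linarith
  -- choose norms on separable subspaces
  have hS' : ∀ S : Subspace ℝ X, ∃ N : ↥S → ℝ,
      TopologicalSpace.IsSeparable (S : Set X) →
        (IsNormOn (↥S) N ∧ EquivNorm 2 N ∧ ∀ t : ℝ, 0 < t → relAsympMod N t ≥ β t) := by
    intro S
    by_cases h : TopologicalSpace.IsSeparable (S : Set X)
    · exact ⟨(hS S h).choose, fun _ => (hS S h).choose_spec⟩
    · exact ⟨fun _ => 0, fun h' => absurd h' h⟩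
  choose 𝒩 h𝒩 using hS'
  have hnorm : ∀ S : Subspace ℝ X, TopologicalSpace.IsSeparable (S : Set X) →
      IsNormOn (↥S) (𝒩 S) := fun S h => (h𝒩 S h).1
  have hequiv : ∀ S : Subspace ℝ X, TopologicalSpace.IsSeparable (S : Set X) →
      EquivNorm 2 (𝒩 S) := fun S h => (h𝒩 S h).2.1
  refine ⟨glueNorm 𝒩, glueNorm_isNormOn hequiv hnorm, glueNorm_equiv hequiv, ?_⟩
  intro t ht
  have htlam : 0 < t / lam := div_pos ht hlam0
  have hb0 : 0 ≤ β (t / lam) := hβ _ (le_of_lt htlam)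
  -- β (t/lam) ≤ 1, via the trivial subspace
  have hbotsep : TopologicalSpace.IsSeparable ((⊥ : Subspace ℝ X) : Set X) := by
    rw [Submodule.bot_coe]
    exact (Set.countable_singleton 0).isSeparable
  have hb1 : β (t / lam) ≤ 1 := by
    have h1 := (h𝒩 ⊥ hbotsep).2.2 (t / lam) htlam
    have h2 := relAsympMod_le_one (hequiv ⊥ hbotsep) (t / lam)
    linarith
  exact glueNorm_modulus hequiv hnorm ht hlam hb0 hb1
    (fun S h => (h𝒩 S h).2.2 (t / lam) htlam)
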